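/- For the basis function φ_i(r) = (1−r)² r² J^{2,1}_{i−4}(2r−1) with i ≥ 4, where J^{α,β}_n denotes the Jacobi polynomial, there holds the expansion φ_i''(r) = [(i−3)(i−1)i / (2(2i−3))] J^{0,1}_{i−2}(2r−1) + [2(i−3)²(i−2)(i−1) / ((2i−3)(2i−5))] J^{0,1}_{i−3}(2r−1) + [(i−4)(i−3)² / (2(2i−5))] J^{0,1}_{i−4}(2r−1). -/

import Mathlib

/-- The (generalized) Jacobi polynomial `J_n^{α,β}`, via its hypergeometric-type expansion. -/
noncomputable def jacobiP (α β : ℝ) (n : ℕ) (x : ℝ) : ℝ :=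
  ∑ k ∈ Finset.range (n + 1),
    ((ascPochhammer ℝ (n - k)).eval (-(n : ℝ) - β) * (ascPochhammer ℝ k).eval ((n : ℝ) + α + β + 1))
      / ((Nat.factorial (n - k) : ℝ) * (Nat.factorial k : ℝ)) * ((x + 1) / 2) ^ k

open Finset

noncomputable def cc (n k : ℕ) : ℝ :=
  (-1)^(n-k) * (Nat.factorial (n+1)) * (Nat.factorial (n+3+k))
    / ((Nat.factorial (k+1)) * (Nat.factorial (n-k)) * (Nat.factorial k) * (Nat.factorial (n+3)))

noncomputable def dd (m k : ℕ) : ℝ :=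
  (-1)^(m-k) * (Nat.factorial (m+1+k))
    / ((Nat.factorial (k+1)) * (Nat.factorial (m-k)) * (Nat.factorial k))

noncomputable def Aa (n : ℕ) : ℝ := ((n:ℝ)+1)*((n:ℝ)+3)*((n:ℝ)+4)/(2*(2*(n:ℝ)+5))
noncomputable def Bb (n : ℕ) : ℝ := 2*((n:ℝ)+1)^2*((n:ℝ)+2)*((n:ℝ)+3)/((2*(n:ℝ)+5)*(2*(n:ℝ)+3))
noncomputable def Cx (n : ℕ) : ℝ := (n:ℝ)*((n:ℝ)+1)^2/(2*(2*(n:ℝ)+3))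

lemma fact_ne (x : ℕ) : ((Nat.factorial x : ℕ) : ℝ) ≠ 0 := by
  exact_mod_cast (Nat.factorial_ne_zero x)

lemma ascPoch_neg (a m : ℕ) :
    (ascPochhammer ℝ m).eval (-(a:ℝ)) = (-1)^m * (a.descFactorial m : ℝ) := by
  rw [ascPochhammer_eval_neg_eq_descPochhammer, descPochhammer_eval_eq_descFactorial]

lemma ascPoch_pos (a m : ℕ) :
    (ascPochhammer ℝ m).eval ((a:ℝ)) = (a.ascFactorial m : ℝ) := by
  rw [← ascPochhammer_eval_cast, ascPochhammer_nat_eq_ascFactorial]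

lemma jacobi21_eq (n : ℕ) (r : ℝ) :
    jacobiP 2 1 n (2*r-1) = ∑ k ∈ range (n+1), cc n k * r^k := by
  unfold jacobiP
  refine Finset.sum_congr rfl fun k hk => ?_
  have hk' : k ≤ n := by simpa [Nat.lt_succ_iff] using hk
  have h1 : (-(n:ℝ) - 1) = -(((n+1 : ℕ)):ℝ) := by push_cast; ring
  have h2 : ((n:ℝ) + 2 + 1 + 1) = (((n+4 : ℕ)):ℝ) := by push_cast; ring
  rw [h1, h2, ascPoch_neg, ascPoch_pos]
  have hd : ((n+1).descFactorial (n-k) : ℝ) = (Nat.factorial (n+1)) / (Nat.factorial (k+1)) := by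
    rw [eq_div_iff (by exact_mod_cast (Nat.factorial_ne_zero (k+1)))]
    have := Nat.factorial_mul_descFactorial (show n - k ≤ n + 1 by omega)
    rw [show n + 1 - (n-k) = k+1 from by omega] at this
    exact_mod_cast (mul_comm _ _).trans this
  have ha : ((n+4).ascFactorial k : ℝ) = (Nat.factorial (n+3+k)) / (Nat.factorial (n+3)) := by
    rw [eq_div_iff (by exact_mod_cast (Nat.factorial_ne_zero (n+3)))]
    have := Nat.factorial_mul_ascFactorial (n+3) k
    exact_mod_cast (mul_comm _ _).trans this
  rw [hd, ha]
  have hr : (2*r - 1 + 1)/2 = r := by ring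
  rw [hr]
  unfold cc
  ring

lemma jacobi01_eq (m : ℕ) (r : ℝ) :
    jacobiP 0 1 m (2*r-1) = ∑ k ∈ range (m+1), dd m k * r^k := by
  unfold jacobiP
  refine Finset.sum_congr rfl fun k hk => ?_
  have hk' : k ≤ m := by simpa [Nat.lt_succ_iff] using hk
  have h1 : (-(m:ℝ) - 1) = -(((m+1 : ℕ)):ℝ) := by push_cast; ring
  have h2 : ((m:ℝ) + 0 + 1 + 1) = (((m+2 : ℕ)):ℝ) := by push_cast; ring
  rw [h1, h2, ascPoch_neg, ascPoch_pos]
  have hd : ((m+1).descFactorial (m-k) : ℝ) = (Nat.factorial (m+1)) / (Nat.factorial (k+1)) := by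
    rw [eq_div_iff (by exact_mod_cast (Nat.factorial_ne_zero (k+1)))]
    have := Nat.factorial_mul_descFactorial (show m - k ≤ m + 1 by omega)
    rw [show m + 1 - (m-k) = k+1 from by omega] at this
    exact_mod_cast (mul_comm _ _).trans this
  have ha : ((m+2).ascFactorial k : ℝ) = (Nat.factorial (m+1+k)) / (Nat.factorial (m+1)) := by
    rw [eq_div_iff (by exact_mod_cast (Nat.factorial_ne_zero (m+1)))]
    have := Nat.factorial_mul_ascFactorial (m+1) k
    exact_mod_cast (mul_comm _ _).trans this
  rw [hd, ha]
  have hr : (2*r - 1 + 1)/2 = r := by ring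
  rw [hr]
  unfold dd
  field_simp

lemma deriv2_eq (n : ℕ) (r : ℝ) :
    deriv (deriv (fun s : ℝ => (1-s)^2 * s^2 * jacobiP 2 1 n (2*s-1))) r
    = ∑ k ∈ range (n+1), cc n k *
        (((k:ℝ)+2)*((k:ℝ)+1)*r^k - 2*((k:ℝ)+3)*((k:ℝ)+2)*r^(k+1) + ((k:ℝ)+4)*((k:ℝ)+3)*r^(k+2)) := by
  have hfun : (fun s : ℝ => (1-s)^2 * s^2 * jacobiP 2 1 n (2*s-1))
      = fun s : ℝ => ∑ k ∈ range (n+1), cc n k * (s^(k+2) - 2*s^(k+3) + s^(k+4)) := by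
    funext s
    rw [jacobi21_eq, Finset.mul_sum]
    exact Finset.sum_congr rfl fun k _ => by ring
  rw [hfun]
  have h1 : ∀ x : ℝ, HasDerivAt
      (fun s : ℝ => ∑ k ∈ range (n+1), cc n k * (s^(k+2) - 2*s^(k+3) + s^(k+4)))
      (∑ k ∈ range (n+1), cc n k *
        (((k:ℝ)+2)*x^(k+1) - 2*(((k:ℝ)+3)*x^(k+2)) + ((k:ℝ)+4)*x^(k+3))) x := by
    intro x
    refine HasDerivAt.fun_sum fun k _ => ?_
    have p1 : HasDerivAt (fun s : ℝ => s^(k+2)) (((k:ℝ)+2)*x^(k+1)) x := by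
      have := hasDerivAt_pow (k+2) x
      simpa [Nat.cast_add] using this
    have p2 : HasDerivAt (fun s : ℝ => s^(k+3)) (((k:ℝ)+3)*x^(k+2)) x := by
      have := hasDerivAt_pow (k+3) x
      simpa [Nat.cast_add] using this
    have p3 : HasDerivAt (fun s : ℝ => s^(k+4)) (((k:ℝ)+4)*x^(k+3)) x := by
      have := hasDerivAt_pow (k+4) x
      simpa [Nat.cast_add] using this
    exact ((p1.sub (p2.const_mul 2)).add p3).const_mul (cc n k)
  have hd1 : deriv (fun s : ℝ => ∑ k ∈ range (n+1), cc n k * (s^(k+2) - 2*s^(k+3) + s^(k+4)))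
      = fun x : ℝ => ∑ k ∈ range (n+1), cc n k *
        (((k:ℝ)+2)*x^(k+1) - 2*(((k:ℝ)+3)*x^(k+2)) + ((k:ℝ)+4)*x^(k+3)) :=
    funext fun x => (h1 x).deriv
  rw [hd1]
  have h2 : HasDerivAt (fun x : ℝ => ∑ k ∈ range (n+1), cc n k *
        (((k:ℝ)+2)*x^(k+1) - 2*(((k:ℝ)+3)*x^(k+2)) + ((k:ℝ)+4)*x^(k+3)))
      (∑ k ∈ range (n+1), cc n k *
        (((k:ℝ)+2)*(((k:ℝ)+1)*r^k) - 2*(((k:ℝ)+3)*(((k:ℝ)+2)*r^(k+1)))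
          + ((k:ℝ)+4)*(((k:ℝ)+3)*r^(k+2)))) r := by
    refine HasDerivAt.fun_sum fun k _ => ?_
    have q1 : HasDerivAt (fun s : ℝ => s^(k+1)) (((k:ℝ)+1)*r^k) r := by
      have := hasDerivAt_pow (k+1) r
      simpa [Nat.cast_add] using this
    have q2 : HasDerivAt (fun s : ℝ => s^(k+2)) (((k:ℝ)+2)*r^(k+1)) r := by
      have := hasDerivAt_pow (k+2) r
      simpa [Nat.cast_add] using this
    have q3 : HasDerivAt (fun s : ℝ => s^(k+3)) (((k:ℝ)+3)*r^(k+2)) r := by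
      have := hasDerivAt_pow (k+3) r
      simpa [Nat.cast_add] using this
    exact (((q1.const_mul (((k:ℝ)+2))).sub ((q2.const_mul (((k:ℝ)+3))).const_mul 2)).add
      (q3.const_mul (((k:ℝ)+4)))).const_mul (cc n k)
  rw [h2.deriv]
  exact Finset.sum_congr rfl fun k _ => by ring
set_option maxHeartbeats 1000000 in
lemma L_gen (m t : ℕ) :
    cc (m+t+2) (m+2) * ((((m:ℝ))+4)*(((m:ℝ))+3)) - cc (m+t+2) (m+1) * (2*(((m:ℝ))+4)*(((m:ℝ))+3)) + cc (m+t+2) m * ((((m:ℝ))+4)*(((m:ℝ))+3))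
    = Aa (m+t+2) * dd (m+t+4) (m+2) + Bb (m+t+2) * dd (m+t+3) (m+2) + Cx (m+t+2) * dd (m+t+2) (m+2) := by
  have F1 : ((Nat.factorial (2*m+t+7)):ℝ) = (2*((m:ℝ))+((t:ℝ))+7)*(2*((m:ℝ))+((t:ℝ))+6)*((Nat.factorial (2*m+t+5)):ℝ) := by
    rw [show 2*m+t+7 = (2*m+t+5)+1+1 from by omega, Nat.factorial_succ, Nat.factorial_succ]; push_cast; ring
  have F2 : ((Nat.factorial (2*m+t+6)):ℝ) = (2*((m:ℝ))+((t:ℝ))+6)*((Nat.factorial (2*m+t+5)):ℝ) := by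
    rw [show 2*m+t+6 = (2*m+t+5)+1 from by omega, Nat.factorial_succ]; push_cast; ring
  have F3 : ((Nat.factorial (m+3)):ℝ) = (((m:ℝ))+3)*(((m:ℝ))+2)*(((m:ℝ))+1)*((Nat.factorial m):ℝ) := by
    rw [show m+3 = m+1+1+1 from by omega, Nat.factorial_succ, Nat.factorial_succ, Nat.factorial_succ]; push_cast; ring
  have F4 : ((Nat.factorial (m+2)):ℝ) = (((m:ℝ))+2)*(((m:ℝ))+1)*((Nat.factorial m):ℝ) := by
    rw [Nat.factorial_succ, Nat.factorial_succ]; push_cast; ring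
  have F5 : ((Nat.factorial (m+1)):ℝ) = (((m:ℝ))+1)*((Nat.factorial m):ℝ) := by
    rw [Nat.factorial_succ]; push_cast; ring
  have F6 : ((Nat.factorial (t+2)):ℝ) = (((t:ℝ))+2)*(((t:ℝ))+1)*((Nat.factorial t):ℝ) := by
    rw [Nat.factorial_succ, Nat.factorial_succ]; push_cast; ring
  have F7 : ((Nat.factorial (t+1)):ℝ) = (((t:ℝ))+1)*((Nat.factorial t):ℝ) := by
    rw [Nat.factorial_succ]; push_cast; ring
  have F8 : ((Nat.factorial (m+t+5)):ℝ) = (((m:ℝ))+((t:ℝ))+5)*(((m:ℝ))+((t:ℝ))+4)*((Nat.factorial (m+t+3)):ℝ) := by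
    rw [show m+t+5 = (m+t+3)+1+1 from by omega, Nat.factorial_succ, Nat.factorial_succ]; push_cast; ring
  have hFm : ((Nat.factorial m):ℝ) ≠ 0 := fact_ne m
  have hFt : ((Nat.factorial t):ℝ) ≠ 0 := fact_ne t
  have hF3 : ((Nat.factorial (m+t+3)):ℝ) ≠ 0 := fact_ne (m+t+3)
  have hP : ((Nat.factorial (2*m+t+5)):ℝ) ≠ 0 := fact_ne (2*m+t+5)
  have c1 : (((m:ℝ))+1) ≠ 0 := by positivity
  have c2 : (((m:ℝ))+2) ≠ 0 := by positivity
  have c3 : (((m:ℝ))+3) ≠ 0 := by positivity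
  have c4 : (((t:ℝ))+1) ≠ 0 := by positivity
  have c5 : (((t:ℝ))+2) ≠ 0 := by positivity
  have c6 : (((m:ℝ))+((t:ℝ))+4) ≠ 0 := by positivity
  have c7 : (((m:ℝ))+((t:ℝ))+5) ≠ 0 := by positivity
  have c8 : (2*((m:ℝ))+2*((t:ℝ))+7) ≠ 0 := by positivity
  have c9 : (2*((m:ℝ))+2*((t:ℝ))+9) ≠ 0 := by positivity
  have E1 : cc (m+t+2) (m+2) * ((((m:ℝ))+4)*(((m:ℝ))+3)) = ((-1:ℝ)^t * ((Nat.factorial (2*m+t+5)):ℝ) * (2*(2*((m:ℝ))+2*((t:ℝ))+9)*(2*((m:ℝ))+2*((t:ℝ))+7)*(((t:ℝ))+2)*(((t:ℝ))+1)*(2*((m:ℝ))+((t:ℝ))+7)*(2*((m:ℝ))+((t:ℝ))+6)*(((m:ℝ))+4)*(((m:ℝ))+3))) / (2*(2*((m:ℝ))+2*((t:ℝ))+9)*(2*((m:ℝ))+2*((t:ℝ))+7)*(((m:ℝ))+3)*(((m:ℝ))+2)^2*(((m:ℝ))+1)^2*(((t:ℝ))+2)*(((t:ℝ))+1)*(((m:ℝ))+((t:ℝ))+5)*(((m:ℝ))+((t:ℝ))+4)*((Nat.factorial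 m :ℝ))^2*((Nat.factorial t :ℝ))) := by
    unfold cc
    rw [show m+t+2+3+(m+2) = 2*m+t+7 from by omega, show m+t+2-(m+2) = t from by omega, show m+t+2+1 = m+t+3 from by omega, show m+2+1 = m+3 from by omega, show m+t+2+3 = m+t+5 from by omega, F1, F3, F4, F8]
    push_cast
    field_simp
  have E2 : cc (m+t+2) (m+1) * (2*(((m:ℝ))+4)*(((m:ℝ))+3)) = ((-1:ℝ)^t * ((Nat.factorial (2*m+t+5)):ℝ) * (-(4*(2*((m:ℝ))+2*((t:ℝ))+9)*(2*((m:ℝ))+2*((t:ℝ))+7)*(((m:ℝ))+3)*(((m:ℝ))+2)*(((t:ℝ))+2)*(((m:ℝ))+4)*(((m:ℝ))+3)*(2*((m:ℝ))+((t:ℝ))+6)))) / (2*(2*((m:ℝ))+2*((t:ℝ))+9)*(2*((m:ℝ))+2*((t:ℝ))+7)*(((m:ℝ))+3)*(((m:ℝ))+2)^2*(((m:ℝ))+1)^2*(((t:ℝ))+2)*(((t:ℝ))+1)*(((m:ℝ))+((t:ℝ))+5)*(((m:ℝ))+((t:ℝ))+4)*((Nat.factorial m :ℝ))^2*((Nat.factorial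 t :ℝ))) := by
    unfold cc
    rw [show m+t+2+3+(m+1) = 2*m+t+6 from by omega, show m+t+2-(m+1) = t+1 from by omega, show m+t+2+1 = m+t+3 from by omega, show m+1+1 = m+2 from by omega, show m+t+2+3 = m+t+5 from by omega, F2, F4, F5, F7, F8]
    push_cast
    field_simp
    ring
  have E3 : cc (m+t+2) m * ((((m:ℝ))+4)*(((m:ℝ))+3)) = ((-1:ℝ)^t * ((Nat.factorial (2*m+t+5)):ℝ) * (2*(2*((m:ℝ))+2*((t:ℝ))+9)*(2*((m:ℝ))+2*((t:ℝ))+7)*(((m:ℝ))+3)^2*(((m:ℝ))+2)^2*(((m:ℝ))+1)*(((m:ℝ))+4))) / (2*(2*((m:ℝ))+2*((t:ℝ))+9)*(2*((m:ℝ))+2*((t:ℝ))+7)*(((m:ℝ))+3)*(((m:ℝ))+2)^2*(((m:ℝ))+1)^2*(((t:ℝ))+2)*(((t:ℝ))+1)*(((m:ℝ))+((t:ℝ))+5)*(((m:ℝ))+((t:ℝ))+4)*((Nat.factorial m :ℝ))^2*((Nat.factorial t :ℝ))) := by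
    unfold cc
    rw [show m+t+2+3+m = 2*m+t+5 from by omega, show m+t+2-m = t+2 from by omega, show m+t+2+1 = m+t+3 from by omega, show m+t+2+3 = m+t+5 from by omega, F5, F6, F8]
    push_cast
    field_simp
    ring
  have E4 : Aa (m+t+2) * dd (m+t+4) (m+2) = ((-1:ℝ)^t * ((Nat.factorial (2*m+t+5)):ℝ) * ((((m:ℝ))+((t:ℝ))+3)*(((m:ℝ))+((t:ℝ))+5)*(((m:ℝ))+((t:ℝ))+6)*(2*((m:ℝ))+((t:ℝ))+7)*(2*((m:ℝ))+((t:ℝ))+6)*(2*((m:ℝ))+2*((t:ℝ))+7)*(((m:ℝ))+((t:ℝ))+5)*(((m:ℝ))+((t:ℝ))+4))) / (2*(2*((m:ℝ))+2*((t:ℝ))+9)*(2*((m:ℝ))+2*((t:ℝ))+7)*(((m:ℝ))+3)*(((m:ℝ))+2)^2*(((m:ℝ))+1)^2*(((t:ℝ))+2)*(((t:ℝ))+1)*(((m:ℝ))+((t:ℝ))+5)*(((m:ℝ))+((t:ℝ))+4)*((Nat.factorial m :ℝ))^2*((Nat.factorial t :ℝ))) := by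
    unfold Aa dd
    rw [show m+t+4+1+(m+2) = 2*m+t+7 from by omega, show m+t+4-(m+2) = t+2 from by omega, show m+2+1 = m+3 from by omega, F1, F3, F4, F6]
    push_cast
    field_simp
    ring
  have E5 : Bb (m+t+2) * dd (m+t+3) (m+2) = ((-1:ℝ)^t * ((Nat.factorial (2*m+t+5)):ℝ) * (-(4*(((m:ℝ))+((t:ℝ))+3)^2*(((m:ℝ))+((t:ℝ))+4)*(((m:ℝ))+((t:ℝ))+5)*(2*((m:ℝ))+((t:ℝ))+6)*(((t:ℝ))+2)*(((m:ℝ))+((t:ℝ))+5)*(((m:ℝ))+((t:ℝ))+4)))) / (2*(2*((m:ℝ))+2*((t:ℝ))+9)*(2*((m:ℝ))+2*((t:ℝ))+7)*(((m:ℝ))+3)*(((m:ℝ))+2)^2*(((m:ℝ))+1)^2*(((t:ℝ))+2)*(((t:ℝ))+1)*(((m:ℝ))+((t:ℝ))+5)*(((m:ℝ))+((t:ℝ))+4)*((Nat.factorial m :ℝ))^2*((Nat.factorial t :ℝ))) := by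
    unfold Bb dd
    rw [show m+t+3+1+(m+2) = 2*m+t+6 from by omega, show m+t+3-(m+2) = t+1 from by omega, show m+2+1 = m+3 from by omega, F2, F3, F4, F7]
    push_cast
    field_simp
    ring
  have E6 : Cx (m+t+2) * dd (m+t+2) (m+2) = ((-1:ℝ)^t * ((Nat.factorial (2*m+t+5)):ℝ) * ((((m:ℝ))+((t:ℝ))+2)*(((m:ℝ))+((t:ℝ))+3)^2*(2*((m:ℝ))+2*((t:ℝ))+9)*(((t:ℝ))+2)*(((t:ℝ))+1)*(((m:ℝ))+((t:ℝ))+5)*(((m:ℝ))+((t:ℝ))+4))) / (2*(2*((m:ℝ))+2*((t:ℝ))+9)*(2*((m:ℝ))+2*((t:ℝ))+7)*(((m:ℝ))+3)*(((m:ℝ))+2)^2*(((m:ℝ))+1)^2*(((t:ℝ))+2)*(((t:ℝ))+1)*(((m:ℝ))+((t:ℝ))+5)*(((m:ℝ))+((t:ℝ))+4)*((Nat.factorial m :ℝ))^2*((Nat.factorial t :ℝ))) := by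
    unfold Cx dd
    rw [show m+t+2+1+(m+2) = 2*m+t+5 from by omega, show m+t+2-(m+2) = t from by omega, show m+2+1 = m+3 from by omega, F3, F4]
    push_cast
    field_simp
    ring
  linear_combination E1 - E2 + E3 - E4 - E5 - E6
lemma L_case0 (n : ℕ) :
    cc n 0 * 2 = Aa n * dd (n+2) 0 + Bb n * dd (n+1) 0 + Cx n * dd n 0 := by
  unfold cc dd Aa Bb Cx
  rw [show n+3+0 = n+3 from by omega, show n-0 = n from by omega,
      show n+2-0 = n+2 from by omega, show n+1-0 = n+1 from by omega,
      show n+2+1+0 = n+3 from by omega, show n+1+1+0 = n+2 from by omega,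
      show n+1+0 = n+1 from by omega]
  have F1 : ((Nat.factorial (n+3)):ℝ) = ((n:ℝ)+3)*((n:ℝ)+2)*((n:ℝ)+1)*((Nat.factorial n):ℝ) := by
    rw [show n+3 = n+1+1+1 from by omega, Nat.factorial_succ, Nat.factorial_succ,
      Nat.factorial_succ]; push_cast; ring
  have F2 : ((Nat.factorial (n+2)):ℝ) = ((n:ℝ)+2)*((n:ℝ)+1)*((Nat.factorial n):ℝ) := by
    rw [Nat.factorial_succ, Nat.factorial_succ]; push_cast; ring
  have F3 : ((Nat.factorial (n+1)):ℝ) = ((n:ℝ)+1)*((Nat.factorial n):ℝ) := by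
    rw [Nat.factorial_succ]; push_cast; ring
  rw [F1, F2, F3]
  have h1 : ((Nat.factorial n):ℝ) ≠ 0 := fact_ne n
  have d1 : (2*(n:ℝ)+5) ≠ 0 := by positivity
  have d2 : (2*(n:ℝ)+3) ≠ 0 := by positivity
  have c1 : ((n:ℝ)+1) ≠ 0 := by positivity
  have c2 : ((n:ℝ)+2) ≠ 0 := by positivity
  have c3 : ((n:ℝ)+3) ≠ 0 := by positivity
  norm_num [Nat.factorial]
  field_simp
  ring

lemma L_case1 (t : ℕ) :
    cc (t+1) 1 * 6 - cc (t+1) 0 * 12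
    = Aa (t+1) * dd (t+3) 1 + Bb (t+1) * dd (t+2) 1 + Cx (t+1) * dd (t+1) 1 := by
  unfold cc dd Aa Bb Cx
  rw [show t+1+3+1 = t+5 from by omega, show t+1-1 = t from by omega,
      show t+1+3+0 = t+4 from by omega, show t+1-0 = t+1 from by omega,
      show t+3-1 = t+2 from by omega, show t+3+1+1 = t+5 from by omega,
      show t+2-1 = t+1 from by omega, show t+2+1+1 = t+4 from by omega,
      show t+1+1+1 = t+3 from by omega,
      show t+1+1 = t+2 from by omega, show t+1+3 = t+4 from by omega]
  have F1 : ((Nat.factorial (t+5)):ℝ) = ((t:ℝ)+5)*((t:ℝ)+4)*((t:ℝ)+3)*((t:ℝ)+2)*((t:ℝ)+1)*((Nat.factorial t):ℝ) := by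
    rw [show t+5 = t+1+1+1+1+1 from by omega, Nat.factorial_succ, Nat.factorial_succ,
      Nat.factorial_succ, Nat.factorial_succ, Nat.factorial_succ]; push_cast; ring
  have F2 : ((Nat.factorial (t+4)):ℝ) = ((t:ℝ)+4)*((t:ℝ)+3)*((t:ℝ)+2)*((t:ℝ)+1)*((Nat.factorial t):ℝ) := by
    rw [show t+4 = t+1+1+1+1 from by omega, Nat.factorial_succ, Nat.factorial_succ,
      Nat.factorial_succ, Nat.factorial_succ]; push_cast; ring
  have F3 : ((Nat.factorial (t+3)):ℝ) = ((t:ℝ)+3)*((t:ℝ)+2)*((t:ℝ)+1)*((Nat.factorial t):ℝ) := by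
    rw [show t+3 = t+1+1+1 from by omega, Nat.factorial_succ, Nat.factorial_succ,
      Nat.factorial_succ]; push_cast; ring
  have F4 : ((Nat.factorial (t+2)):ℝ) = ((t:ℝ)+2)*((t:ℝ)+1)*((Nat.factorial t):ℝ) := by
    rw [Nat.factorial_succ, Nat.factorial_succ]; push_cast; ring
  have F5 : ((Nat.factorial (t+1)):ℝ) = ((t:ℝ)+1)*((Nat.factorial t):ℝ) := by
    rw [Nat.factorial_succ]; push_cast; ring
  rw [F1, F2, F3, F4, F5]
  have h1 : ((Nat.factorial t):ℝ) ≠ 0 := fact_ne t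
  have c1 : ((t:ℝ)+1) ≠ 0 := by positivity
  have c2 : ((t:ℝ)+2) ≠ 0 := by positivity
  have c3 : ((t:ℝ)+3) ≠ 0 := by positivity
  have c4 : ((t:ℝ)+4) ≠ 0 := by positivity
  have c5 : ((t:ℝ)+5) ≠ 0 := by positivity
  have d1 : (2*((t:ℝ)+1)+5) ≠ 0 := by positivity
  have d2 : (2*((t:ℝ)+1)+3) ≠ 0 := by positivity
  norm_num [Nat.factorial]
  push_cast
  field_simp
  ring

lemma L_case4 : -(cc 0 0 * 12) = Aa 0 * dd 2 1 + Bb 0 * dd 1 1 := by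
  norm_num [cc, dd, Aa, Bb, Cx, Nat.factorial]

lemma L_case5 (m : ℕ) :
    -(cc (m+1) (m+1) * (2*((m:ℝ)+4)*((m:ℝ)+3))) + cc (m+1) m * (((m:ℝ)+4)*((m:ℝ)+3))
    = Aa (m+1) * dd (m+3) (m+2) + Bb (m+1) * dd (m+2) (m+2) := by
  unfold cc dd Aa Bb
  rw [show m+1+3+(m+1) = 2*m+5 from by omega, show m+1-(m+1) = 0 from by omega,
      show m+1+3+m = 2*m+4 from by omega, show m+1-m = 1 from by omega,
      show m+3+1+(m+2) = 2*m+6 from by omega, show m+3-(m+2) = 1 from by omega,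
      show m+2+1+(m+2) = 2*m+5 from by omega, show m+2-(m+2) = 0 from by omega,
      show m+1+1 = m+2 from by omega, show m+1+3 = m+4 from by omega,
      show m+2+1 = m+3 from by omega]
  have F1 : ((Nat.factorial (2*m+6)):ℝ) = (2*(m:ℝ)+6)*(2*(m:ℝ)+5)*((Nat.factorial (2*m+4)):ℝ) := by
    rw [show 2*m+6 = (2*m+4)+1+1 from by omega, Nat.factorial_succ, Nat.factorial_succ]
    push_cast; ring
  have F2 : ((Nat.factorial (2*m+5)):ℝ) = (2*(m:ℝ)+5)*((Nat.factorial (2*m+4)):ℝ) := by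
    rw [show 2*m+5 = (2*m+4)+1 from by omega, Nat.factorial_succ]; push_cast; ring
  have F3 : ((Nat.factorial (m+4)):ℝ) = ((m:ℝ)+4)*((m:ℝ)+3)*((m:ℝ)+2)*((m:ℝ)+1)*((Nat.factorial m):ℝ) := by
    rw [show m+4 = m+1+1+1+1 from by omega, Nat.factorial_succ, Nat.factorial_succ,
      Nat.factorial_succ, Nat.factorial_succ]; push_cast; ring
  have F4 : ((Nat.factorial (m+3)):ℝ) = ((m:ℝ)+3)*((m:ℝ)+2)*((m:ℝ)+1)*((Nat.factorial m):ℝ) := by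
    rw [show m+3 = m+1+1+1 from by omega, Nat.factorial_succ, Nat.factorial_succ,
      Nat.factorial_succ]; push_cast; ring
  have F5 : ((Nat.factorial (m+2)):ℝ) = ((m:ℝ)+2)*((m:ℝ)+1)*((Nat.factorial m):ℝ) := by
    rw [Nat.factorial_succ, Nat.factorial_succ]; push_cast; ring
  rw [F1, F2, F3, F4, F5]
  have h1 : ((Nat.factorial m):ℝ) ≠ 0 := fact_ne m
  have h2 : ((Nat.factorial (2*m+4)):ℝ) ≠ 0 := fact_ne (2*m+4)
  have c1 : ((m:ℝ)+1) ≠ 0 := by positivity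
  have c2 : ((m:ℝ)+2) ≠ 0 := by positivity
  have c3 : ((m:ℝ)+3) ≠ 0 := by positivity
  have c4 : ((m:ℝ)+4) ≠ 0 := by positivity
  have d1 : (2*((m:ℝ)+1)+5) ≠ 0 := by positivity
  have d2 : (2*((m:ℝ)+1)+3) ≠ 0 := by positivity
  norm_num [Nat.factorial]
  push_cast
  field_simp
  ring

lemma L_case6 (n : ℕ) :
    cc n n * (((n:ℝ)+4)*((n:ℝ)+3)) = Aa n * dd (n+2) (n+2) := by
  unfold cc dd Aa
  rw [show n+3+n = 2*n+3 from by omega, show n-n = 0 from by omega,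
      show n+2+1+(n+2) = 2*n+5 from by omega, show n+2-(n+2) = 0 from by omega,
      show n+2+1 = n+3 from by omega]
  have F1 : ((Nat.factorial (2*n+5)):ℝ) = (2*(n:ℝ)+5)*(2*(n:ℝ)+4)*((Nat.factorial (2*n+3)):ℝ) := by
    rw [show 2*n+5 = (2*n+3)+1+1 from by omega, Nat.factorial_succ, Nat.factorial_succ]
    push_cast; ring
  have F2 : ((Nat.factorial (n+3)):ℝ) = ((n:ℝ)+3)*((n:ℝ)+2)*((n:ℝ)+1)*((Nat.factorial n):ℝ) := by
    rw [show n+3 = n+1+1+1 from by omega, Nat.factorial_succ, Nat.factorial_succ,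
      Nat.factorial_succ]; push_cast; ring
  have F3 : ((Nat.factorial (n+2)):ℝ) = ((n:ℝ)+2)*((n:ℝ)+1)*((Nat.factorial n):ℝ) := by
    rw [Nat.factorial_succ, Nat.factorial_succ]; push_cast; ring
  have F4 : ((Nat.factorial (n+1)):ℝ) = ((n:ℝ)+1)*((Nat.factorial n):ℝ) := by
    rw [Nat.factorial_succ]; push_cast; ring
  rw [F1, F2, F3, F4]
  have h1 : ((Nat.factorial n):ℝ) ≠ 0 := fact_ne n
  have h2 : ((Nat.factorial (2*n+3)):ℝ) ≠ 0 := fact_ne (2*n+3)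
  have c1 : ((n:ℝ)+1) ≠ 0 := by positivity
  have c2 : ((n:ℝ)+2) ≠ 0 := by positivity
  have c3 : ((n:ℝ)+3) ≠ 0 := by positivity
  have d1 : (2*(n:ℝ)+5) ≠ 0 := by positivity
  norm_num [Nat.factorial]
  field_simp
  ring

lemma shiftpad (a N M : ℕ) (h : a + N ≤ M) (g : ℕ → ℝ) :
    ∑ j ∈ Finset.range M, (if a ≤ j ∧ j < a + N then g (j-a) else 0)
      = ∑ k ∈ Finset.range N, g k := by
  rw [← Finset.sum_subset (Finset.range_subset_range.2 h) (fun x hx hx' => by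
    simp only [Finset.mem_range] at hx hx'
    rw [if_neg (by omega)])]
  rw [Finset.sum_range_add]
  rw [Finset.sum_eq_zero (fun x hx => by
    simp only [Finset.mem_range] at hx
    rw [if_neg (by omega)])]
  rw [zero_add]
  refine Finset.sum_congr rfl fun x hx => ?_
  simp only [Finset.mem_range] at hx
  rw [if_pos (by omega), show a + x - a = x from by omega]

lemma coeff_main (n : ℕ) (r : ℝ) :
    (∑ k ∈ range (n+1), cc n k *
        (((k:ℝ)+2)*((k:ℝ)+1)*r^k - 2*((k:ℝ)+3)*((k:ℝ)+2)*r^(k+1) + ((k:ℝ)+4)*((k:ℝ)+3)*r^(k+2)))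
    = Aa n * ∑ k ∈ range (n+3), dd (n+2) k * r^k
      + Bb n * ∑ k ∈ range (n+2), dd (n+1) k * r^k
      + Cx n * ∑ k ∈ range (n+1), dd n k * r^k := by
  have hL : (∑ k ∈ range (n+1), cc n k *
        (((k:ℝ)+2)*((k:ℝ)+1)*r^k - 2*((k:ℝ)+3)*((k:ℝ)+2)*r^(k+1) + ((k:ℝ)+4)*((k:ℝ)+3)*r^(k+2)))
      = ∑ j ∈ range (n+3),
          ((if 0 ≤ j ∧ j < 0+(n+1) then
              cc n (j-0) * ((((j-0:ℕ):ℝ)+2)*(((j-0:ℕ):ℝ)+1)*r^(j-0)) else 0)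
          - (if 1 ≤ j ∧ j < 1+(n+1) then
              cc n (j-1) * (2*(((j-1:ℕ):ℝ)+3)*(((j-1:ℕ):ℝ)+2)*r^((j-1)+1)) else 0)
          + (if 2 ≤ j ∧ j < 2+(n+1) then
              cc n (j-2) * ((((j-2:ℕ):ℝ)+4)*(((j-2:ℕ):ℝ)+3)*r^((j-2)+2)) else 0)) := by
    rw [Finset.sum_add_distrib, Finset.sum_sub_distrib,
        shiftpad 0 (n+1) (n+3) (by omega) (fun k => cc n k * ((((k:ℕ):ℝ)+2)*(((k:ℕ):ℝ)+1)*r^k)),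
        shiftpad 1 (n+1) (n+3) (by omega)
          (fun k => cc n k * (2*(((k:ℕ):ℝ)+3)*(((k:ℕ):ℝ)+2)*r^(k+1))),
        shiftpad 2 (n+1) (n+3) (by omega)
          (fun k => cc n k * ((((k:ℕ):ℝ)+4)*(((k:ℕ):ℝ)+3)*r^(k+2))),
        ← Finset.sum_sub_distrib, ← Finset.sum_add_distrib]
    exact Finset.sum_congr rfl fun k _ => by ring
  have hR : Aa n * (∑ k ∈ range (n+3), dd (n+2) k * r^k)
      + Bb n * (∑ k ∈ range (n+2), dd (n+1) k * r^k)
      + Cx n * (∑ k ∈ range (n+1), dd n k * r^k)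
      = ∑ j ∈ range (n+3),
          ((Aa n * (dd (n+2) j * r^j))
          + (if 0 ≤ j ∧ j < 0+(n+2) then Bb n * (dd (n+1) (j-0) * r^(j-0)) else 0)
          + (if 0 ≤ j ∧ j < 0+(n+1) then Cx n * (dd n (j-0) * r^(j-0)) else 0)) := by
    rw [Finset.sum_add_distrib, Finset.sum_add_distrib,
        shiftpad 0 (n+2) (n+3) (by omega) (fun k => Bb n * (dd (n+1) k * r^k)),
        shiftpad 0 (n+1) (n+3) (by omega) (fun k => Cx n * (dd n k * r^k)),
        Finset.mul_sum, Finset.mul_sum, Finset.mul_sum]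
  rw [hL, hR]
  refine Finset.sum_congr rfl fun j hj => ?_
  simp only [Finset.mem_range] at hj
  by_cases h0 : j < n+1
  · rw [if_pos (by omega : 0 ≤ j ∧ j < 0+(n+1)), if_pos (by omega : 0 ≤ j ∧ j < 0+(n+2)),
        if_pos (by omega : 0 ≤ j ∧ j < 0+(n+1))]
    by_cases hj0 : j = 0
    · subst hj0
      rw [if_neg (by omega : ¬(1 ≤ 0 ∧ 0 < 1+(n+1))), if_neg (by omega : ¬(2 ≤ 0 ∧ 0 < 2+(n+1)))]
      norm_num
      linear_combination L_case0 n
    · by_cases hj1 : j = 1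
      · subst hj1
        obtain ⟨t, rfl⟩ : ∃ t, n = t+1 := ⟨n-1, by omega⟩
        rw [if_pos (by omega : 1 ≤ 1 ∧ 1 < 1+(t+1+1)), if_neg (by omega : ¬(2 ≤ 1 ∧ 1 < 2+(t+1+1)))]
        norm_num
        linear_combination r * L_case1 t
      · obtain ⟨m, rfl⟩ : ∃ m, j = m+2 := ⟨j-2, by omega⟩
        obtain ⟨t, rfl⟩ : ∃ t, n = m+t+2 := ⟨n-(m+2), by omega⟩
        rw [if_pos (by omega : 1 ≤ m+2 ∧ m+2 < 1+(m+t+2+1)),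
            if_pos (by omega : 2 ≤ m+2 ∧ m+2 < 2+(m+t+2+1))]
        simp only [Nat.sub_zero, show m+2-1 = m+1 from rfl, show m+2-2 = m from rfl]
        push_cast
        linear_combination r^(m+2) * L_gen m t
  · by_cases h1 : j = n+1
    · subst h1
      rw [if_neg (by omega : ¬(0 ≤ n+1 ∧ n+1 < 0+(n+1))), if_pos (by omega : 1 ≤ n+1 ∧ n+1 < 1+(n+1)),
          if_pos (by omega : 0 ≤ n+1 ∧ n+1 < 0+(n+2))]
      rw [if_neg (by omega : ¬(0 ≤ n+1 ∧ n+1 < 0+(n+1)))]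
      by_cases hn : n = 0
      · subst hn
        rw [if_neg (by omega : ¬(2 ≤ 0+1 ∧ 0+1 < 2+(0+1)))]
        norm_num
        linear_combination r * L_case4
      · obtain ⟨m, rfl⟩ : ∃ m, n = m+1 := ⟨n-1, by omega⟩
        rw [if_pos (by omega : 2 ≤ m+1+1 ∧ m+1+1 < 2+(m+1+1))]
        simp only [Nat.sub_zero, show m+1+1-1 = m+1 from rfl, show m+1+1-2 = m from rfl]
        push_cast
        linear_combination r^(m+2) * L_case5 m
    · have h2 : j = n+2 := by omega
      subst h2
      rw [if_neg (by omega : ¬(0 ≤ n+2 ∧ n+2 < 0+(n+1))), if_neg (by omega : ¬(1 ≤ n+2 ∧ n+2 < 1+(n+1))),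
          if_neg (by omega : ¬(0 ≤ n+2 ∧ n+2 < 0+(n+2))),
          if_pos (by omega : 2 ≤ n+2 ∧ n+2 < 2+(n+1))]
      rw [if_neg (by omega : ¬(0 ≤ n+2 ∧ n+2 < 0+(n+1)))]
      simp only [Nat.sub_zero, show n+2-2 = n from rfl]
      push_cast
      linear_combination r^(n+2) * L_case6 n

/-- expansion of `φ_i''` in the Jacobi basis `J^{0,1}`. -/
theorem stmt9 (i : ℕ) (hi : 4 ≤ i) (r : ℝ) :
    deriv (deriv (fun s : ℝ => (1 - s) ^ 2 * s ^ 2 * jacobiP 2 1 (i - 4) (2 * s - 1))) r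
    = ((i : ℝ) - 3) * ((i : ℝ) - 1) * (i : ℝ) / (2 * (2 * (i : ℝ) - 3))
        * jacobiP 0 1 (i - 2) (2 * r - 1)
      + 2 * ((i : ℝ) - 3) ^ 2 * ((i : ℝ) - 2) * ((i : ℝ) - 1)
          / ((2 * (i : ℝ) - 3) * (2 * (i : ℝ) - 5)) * jacobiP 0 1 (i - 3) (2 * r - 1)
      + ((i : ℝ) - 4) * ((i : ℝ) - 3) ^ 2 / (2 * (2 * (i : ℝ) - 5))
          * jacobiP 0 1 (i - 4) (2 * r - 1) := by
  obtain ⟨n, rfl⟩ : ∃ n, i = n+4 := ⟨i-4, by omega⟩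
  rw [show n+4-4 = n from by omega, show n+4-2 = n+2 from by omega,
      show n+4-3 = n+1 from by omega]
  rw [deriv2_eq, jacobi01_eq, jacobi01_eq, jacobi01_eq, coeff_main]
  unfold Aa Bb Cx
  push_cast
  ring
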